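/- (Hammersley, existence of the dimer entropy) Fix d ≥ 2. For integers a₁, …, a_d ≥ 1 with even product, let f(a₁, …, a_d) be the number of dimer tilings of the d-dimensional brick of side lengths a₁, …, a_d, i.e. the number of perfect matchings of the grid graph on {1,…,a₁} × ⋯ × {1,…,a_d} with edges between points at ℓ¹-distance 1. Then there is a finite constant λ_d such that (a₁ a₂ ⋯ a_d)^{-1} log f(a₁, …, a_d) → λ_d as all of a₁, …, a_d tend to infinity through values of even product. -/

import Mathlib

open Filter

/-- The number of dimer tilings (perfect matchings) of the `d`-dimensional brick
with side lengths `a 0, …, a (d-1)`: fixed-point-free involutions of the grid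
`{0,…,a 0 - 1} × ⋯` matching each cell to a cell at `ℓ¹`-distance `1`. -/
noncomputable def dimerCount (d : ℕ) (a : Fin d → ℕ) : ℕ :=
  Nat.card {m : (∀ i, Fin (a i)) → (∀ i, Fin (a i)) //
    Function.Involutive m ∧
    ∀ x, (∑ i, |((x i : ℤ)) - ((m x i : ℤ))|) = 1}

set_option linter.unusedSectionVars false

section glue
variable {d : ℕ} {a b c : Fin d → ℕ} {j : Fin d}

private def e1 (hj : a j = b j + c j) (hb : ∀ i, i ≠ j → b i = a i)
    (y : ∀ i, Fin (b i)) (i : Fin d) : Fin (a i) :=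
  ⟨(y i : ℕ), by
    rcases eq_or_ne i j with rfl | h
    · have := (y i).isLt; omega
    · rw [← hb i h]; exact (y i).isLt⟩

private def e2 [DecidableEq (Fin d)] (hj : a j = b j + c j) (hc : ∀ i, i ≠ j → c i = a i)
    (y : ∀ i, Fin (c i)) (i : Fin d) : Fin (a i) :=
  ⟨if i = j then b j + (y i : ℕ) else (y i : ℕ), by
    rcases eq_or_ne i j with rfl | h
    · rw [if_pos rfl]; have := (y i).isLt; omega
    · rw [if_neg h, ← hc i h]; exact (y i).isLt⟩

private def p1 (hb : ∀ i, i ≠ j → b i = a i)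
    (x : ∀ i, Fin (a i)) (h : (x j : ℕ) < b j) (i : Fin d) : Fin (b i) :=
  ⟨(x i : ℕ), by
    rcases eq_or_ne i j with rfl | hne
    · exact h
    · rw [hb i hne]; exact (x i).isLt⟩

private def p2 [DecidableEq (Fin d)] (hj : a j = b j + c j) (hc : ∀ i, i ≠ j → c i = a i)
    (x : ∀ i, Fin (a i)) (h : ¬ (x j : ℕ) < b j) (i : Fin d) : Fin (c i) :=
  ⟨if i = j then (x i : ℕ) - b j else (x i : ℕ), by
    rcases eq_or_ne i j with rfl | hne
    · rw [if_pos rfl]; have := (x i).isLt; omega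
    · rw [if_neg hne, hc i hne]; exact (x i).isLt⟩

variable [DecidableEq (Fin d)] {hj : a j = b j + c j} {hb : ∀ i, i ≠ j → b i = a i}
  {hc : ∀ i, i ≠ j → c i = a i}

private lemma e1_val (y : ∀ i, Fin (b i)) (i : Fin d) : ((e1 hj hb y i : ℕ)) = y i := rfl

private lemma p1_val (x : ∀ i, Fin (a i)) (h : (x j : ℕ) < b j) (i : Fin d) :
    ((p1 hb x h i : ℕ)) = x i := rfl

private lemma e2_val_self (y : ∀ i, Fin (c i)) : ((e2 hj hc y j : ℕ)) = b j + y j := by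
  show (if j = j then b j + ((y j : ℕ)) else (y j : ℕ)) = _; rw [if_pos rfl]

private lemma e2_val_ne (y : ∀ i, Fin (c i)) {i : Fin d} (hne : i ≠ j) :
    ((e2 hj hc y i : ℕ)) = y i := by
  show (if i = j then b j + ((y i : ℕ)) else (y i : ℕ)) = _; rw [if_neg hne]

private lemma p2_val_self (x : ∀ i, Fin (a i)) (h : ¬ (x j : ℕ) < b j) :
    ((p2 hj hc x h j : ℕ)) = (x j : ℕ) - b j := by
  show (if j = j then (x j : ℕ) - b j else (x j : ℕ)) = _; rw [if_pos rfl]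

private lemma p2_val_ne (x : ∀ i, Fin (a i)) (h : ¬ (x j : ℕ) < b j) {i : Fin d} (hne : i ≠ j) :
    ((p2 hj hc x h i : ℕ)) = x i := by
  show (if i = j then (x i : ℕ) - b j else (x i : ℕ)) = _; rw [if_neg hne]

private lemma e1_p1 (x : ∀ i, Fin (a i)) (h : (x j : ℕ) < b j) :
    e1 hj hb (p1 hb x h) = x := funext fun i => Fin.ext rfl

private lemma p1_e1 (y : ∀ i, Fin (b i)) (h : ((e1 hj hb y j : ℕ)) < b j) :
    p1 hb (e1 hj hb y) h = y := funext fun i => Fin.ext rfl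

private lemma e2_p2 (x : ∀ i, Fin (a i)) (h : ¬ (x j : ℕ) < b j) :
    e2 hj hc (p2 hj hc x h) = x := by
  funext i
  apply Fin.ext
  rcases eq_or_ne i j with rfl | hne
  · rw [e2_val_self, p2_val_self]; omega
  · rw [e2_val_ne _ hne, p2_val_ne _ _ hne]

private lemma p2_e2 (y : ∀ i, Fin (c i)) (h : ¬ ((e2 hj hc y j : ℕ)) < b j) :
    p2 hj hc (e2 hj hc y) h = y := by
  funext i
  apply Fin.ext
  rcases eq_or_ne i j with rfl | hne
  · rw [p2_val_self, e2_val_self]; omega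
  · rw [p2_val_ne _ _ hne, e2_val_ne _ hne]

private lemma lt1 (y : ∀ i, Fin (b i)) : ((e1 hj hb y j : ℕ)) < b j := (y j).isLt

private lemma nlt2 (y : ∀ i, Fin (c i)) : ¬ ((e2 hj hc y j : ℕ)) < b j := by
  rw [e2_val_self]; omega

private lemma e1_inj : Function.Injective (e1 hj hb) := fun u v huv =>
  funext fun i => Fin.ext (by
    have := congrArg (fun w => ((w i : ℕ))) huv
    simpa [e1_val] using this)

private lemma e2_inj : Function.Injective (e2 hj hc) := fun u v huv =>
  funext fun i => Fin.ext (by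
    have h0 := congrArg Fin.val (congrFun huv i)
    rcases eq_or_ne i j with rfl | hne
    · rw [e2_val_self, e2_val_self] at h0; omega
    · rwa [e2_val_ne _ hne, e2_val_ne _ hne] at h0)

private def gf (hj : a j = b j + c j) (hb : ∀ i, i ≠ j → b i = a i)
    (hc : ∀ i, i ≠ j → c i = a i)
    (m₁ : (∀ i, Fin (b i)) → (∀ i, Fin (b i))) (m₂ : (∀ i, Fin (c i)) → (∀ i, Fin (c i)))
    (x : ∀ i, Fin (a i)) : ∀ i, Fin (a i) :=
  if h : (x j : ℕ) < b j then e1 hj hb (m₁ (p1 hb x h)) else e2 hj hc (m₂ (p2 hj hc x h))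

variable {m₁ : (∀ i, Fin (b i)) → (∀ i, Fin (b i))} {m₂ : (∀ i, Fin (c i)) → (∀ i, Fin (c i))}

private lemma gf_pos (x : ∀ i, Fin (a i)) (h : (x j : ℕ) < b j) :
    gf hj hb hc m₁ m₂ x = e1 hj hb (m₁ (p1 hb x h)) := dif_pos h

private lemma gf_neg (x : ∀ i, Fin (a i)) (h : ¬ (x j : ℕ) < b j) :
    gf hj hb hc m₁ m₂ x = e2 hj hc (m₂ (p2 hj hc x h)) := dif_neg h

private lemma gf_e1 (y : ∀ i, Fin (b i)) :
    gf hj hb hc m₁ m₂ (e1 hj hb y) = e1 hj hb (m₁ y) := by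
  rw [gf_pos _ (lt1 y), p1_e1]

private lemma gf_e2 (y : ∀ i, Fin (c i)) :
    gf hj hb hc m₁ m₂ (e2 hj hc y) = e2 hj hc (m₂ y) := by
  rw [gf_neg _ (nlt2 y), p2_e2]

lemma dimer_glue (hj : a j = b j + c j) (hb : ∀ i, i ≠ j → b i = a i)
    (hc : ∀ i, i ≠ j → c i = a i) :
    dimerCount d b * dimerCount d c ≤ dimerCount d a := by
  rw [dimerCount, dimerCount, dimerCount, ← Nat.card_prod]
  refine Nat.card_le_card_of_injective
    (fun p => ⟨gf hj hb hc p.1.1 p.2.1, ?_, ?_⟩) ?_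
  · -- involutive
    intro x
    by_cases h : (x j : ℕ) < b j
    · rw [gf_pos x h, gf_e1, p.1.2.1 (p1 hb x h), e1_p1]
    · rw [gf_neg x h, gf_e2, p.2.2.1 (p2 hj hc x h), e2_p2]
  · -- distance
    intro x
    by_cases h : (x j : ℕ) < b j
    · rw [gf_pos x h]
      calc (∑ i, |((x i : ℤ)) - ((e1 hj hb (p.1.1 (p1 hb x h)) i : ℤ))|)
          = ∑ i, |((p1 hb x h i : ℤ)) - ((p.1.1 (p1 hb x h) i : ℤ))| :=
            Finset.sum_congr rfl (fun i _ => by rw [show ((e1 hj hb (p.1.1 (p1 hb x h)) i : ℕ)) = ((p.1.1 (p1 hb x h)) i : ℕ) from rfl, show ((p1 hb x h i : ℕ)) = ((x i : ℕ)) from rfl])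
        _ = 1 := p.1.2.2 _
    · rw [gf_neg x h]
      calc (∑ i, |((x i : ℤ)) - ((e2 hj hc (p.2.1 (p2 hj hc x h)) i : ℤ))|)
          = ∑ i, |((p2 hj hc x h i : ℤ)) - ((p.2.1 (p2 hj hc x h) i : ℤ))| := by
            refine Finset.sum_congr rfl (fun i _ => ?_)
            rcases eq_or_ne i j with rfl | hne
            · rw [show (((e2 hj hc (p.2.1 (p2 hj hc x h)) i : ℕ)) : ℤ) = ((b i : ℕ) : ℤ) + (((p.2.1 (p2 hj hc x h)) i : ℕ) : ℤ) from by rw [e2_val_self]; push_cast; ring,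
                show (((p2 hj hc x h i : ℕ)) : ℤ) = (((x i : ℕ)) : ℤ) - ((b i : ℕ) : ℤ) from by rw [p2_val_self]; push_cast [Nat.cast_sub (le_of_not_gt h)]; ring]
              congr 1; ring
            · rw [show ((e2 hj hc (p.2.1 (p2 hj hc x h)) i : ℕ)) = ((p.2.1 (p2 hj hc x h)) i : ℕ) from e2_val_ne _ hne,
                show ((p2 hj hc x h i : ℕ)) = ((x i : ℕ)) from p2_val_ne _ _ hne]
        _ = 1 := p.2.2.2 _
  · -- injective
    rintro ⟨⟨n₁, hn₁⟩, ⟨n₂, hn₂⟩⟩ ⟨⟨k₁, hk₁⟩, ⟨k₂, hk₂⟩⟩ hpq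
    have heq : gf hj hb hc n₁ n₂ = gf hj hb hc k₁ k₂ := congrArg Subtype.val hpq
    have h1 : n₁ = k₁ := funext fun y => e1_inj (by
      have := congrFun heq (e1 hj hb y)
      rwa [gf_e1, gf_e1] at this)
    have h2 : n₂ = k₂ := funext fun y => e2_inj (by
      have := congrFun heq (e2 hj hc y)
      rwa [gf_e2, gf_e2] at this)
    simp [h1, h2]
end glue

section basic
variable {d : ℕ}

private def pairF {n : ℕ} (hn : n % 2 = 0) (v : Fin n) : Fin n :=
  ⟨if (v : ℕ) % 2 = 0 then (v : ℕ) + 1 else (v : ℕ) - 1, by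
    have := v.isLt
    by_cases h : (v : ℕ) % 2 = 0
    · rw [if_pos h]; omega
    · rw [if_neg h]; omega⟩

private lemma pairF_val {n : ℕ} (hn : n % 2 = 0) (v : Fin n) :
    ((pairF hn v : ℕ)) = if (v : ℕ) % 2 = 0 then (v : ℕ) + 1 else (v : ℕ) - 1 := rfl

private lemma pairF_pairF {n : ℕ} (hn : n % 2 = 0) (v : Fin n) :
    pairF hn (pairF hn v) = v := by
  apply Fin.ext
  rw [pairF_val, pairF_val]
  have := v.isLt
  by_cases h : (v : ℕ) % 2 = 0
  · rw [if_pos h, if_neg (by omega)]; omega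
  · rw [if_neg h, if_pos (by omega)]; omega

lemma one_le_dimerCount (a : Fin d → ℕ) (j : Fin d) (hev : Even (a j)) :
    1 ≤ dimerCount d a := by
  classical
  have hn : a j % 2 = 0 := Nat.even_iff.mp hev
  have : Nonempty {m : (∀ i, Fin (a i)) → (∀ i, Fin (a i)) //
      Function.Involutive m ∧ ∀ x, (∑ i, |((x i : ℤ)) - ((m x i : ℤ))|) = 1} := by
    refine ⟨fun x => Function.update x j (pairF hn (x j)), ?_, ?_⟩
    · intro x
      funext i
      rcases eq_or_ne i j with rfl | hne
      · simp only [Function.update_self, pairF_pairF]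
      · simp only [Function.update_of_ne hne]
    · intro x
      rw [Finset.sum_eq_single_of_mem j (Finset.mem_univ j)
        (fun i _ hne => by simp only [Function.update_of_ne hne]; simp)]
      simp only [Function.update_self]
      have hv := (x j).isLt
      by_cases h : ((x j : ℕ)) % 2 = 0
      · rw [show (((pairF hn (x j) : ℕ)) : ℤ) = ((x j : ℕ) : ℤ) + 1 by
          rw [pairF_val, if_pos h]; push_cast; ring]
        simp
      · rw [show (((pairF hn (x j) : ℕ)) : ℤ) = ((x j : ℕ) : ℤ) - 1 by
          rw [pairF_val, if_neg h]; push_cast [Nat.cast_sub (by omega : 1 ≤ (x j : ℕ))]; ring]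
        simp
  rw [dimerCount]
  exact Nat.card_pos

lemma one_le_dimerCount_of_even (a : Fin d → ℕ) (hev : Even (∏ i, a i)) (hd : 1 ≤ d) :
    1 ≤ dimerCount d a := by
  have h2 : (2 : ℕ) ∣ ∏ i, a i := even_iff_two_dvd.mp hev
  have : ∃ i : Fin d, 2 ∣ a i := by
    classical
    have : ∀ s : Finset (Fin d), (2 : ℕ) ∣ ∏ i ∈ s, a i → ∃ i ∈ s, 2 ∣ a i := by
      intro s
      induction s using Finset.induction_on with
      | empty => intro h; simp at h
      | insert _ _ hx ih =>
          rename_i x s'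
          rw [Finset.prod_insert hx]
          intro h
          rcases (Nat.prime_two.dvd_mul).mp h with h | h
          · exact ⟨x, Finset.mem_insert_self _ _, h⟩
          · obtain ⟨i, hi, h⟩ := ih h
            exact ⟨i, Finset.mem_insert_of_mem hi, h⟩
    obtain ⟨i, _, hi⟩ := this Finset.univ h2
    exact ⟨i, hi⟩
  obtain ⟨i, hi⟩ := this
  exact one_le_dimerCount a i (even_iff_two_dvd.mpr hi)
end basic

section upper
variable {d : ℕ}

private lemma nbr_card {a : Fin d → ℕ} (x : ∀ i, Fin (a i)) :
    Nat.card {y : ∀ i, Fin (a i) // (∑ i, |((x i : ℤ)) - ((y i : ℤ))|) = 1} ≤ 2 * d := by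
  classical
  have key : ∀ y : ∀ i, Fin (a i), (∑ i, |((x i : ℤ)) - ((y i : ℤ))|) = 1 →
      ∃ i, (∀ k, k ≠ i → y k = x k) ∧ |((x i : ℤ)) - ((y i : ℤ))| = 1 := by
    intro y hy
    have hpos : ∃ i, |((x i : ℤ)) - ((y i : ℤ))| ≠ 0 := by
      by_contra hcon
      push_neg at hcon
      rw [Finset.sum_eq_zero (fun i _ => hcon i)] at hy
      omega
    obtain ⟨i, hi⟩ := hpos
    have h1 : 1 ≤ |((x i : ℤ)) - ((y i : ℤ))| := by
      have := abs_nonneg (((x i : ℤ)) - ((y i : ℤ))); omega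
    have hsum : |((x i : ℤ)) - ((y i : ℤ))| + ∑ k ∈ Finset.univ.erase i, |((x k : ℤ)) - ((y k : ℤ))| = ∑ k, |((x k : ℤ)) - ((y k : ℤ))| := by
      exact Finset.add_sum_erase _ (fun k => |((x k : ℤ)) - ((y k : ℤ))|) (Finset.mem_univ i)
    have hrest : ∑ k ∈ Finset.univ.erase i, |((x k : ℤ)) - ((y k : ℤ))| = 0 := by
      have hnn : 0 ≤ ∑ k ∈ Finset.univ.erase i, |((x k : ℤ)) - ((y k : ℤ))| :=
        Finset.sum_nonneg (fun k _ => abs_nonneg _)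
      omega
    have hzero : ∀ k, k ≠ i → |((x k : ℤ)) - ((y k : ℤ))| = 0 := by
      intro k hk
      have := (Finset.sum_eq_zero_iff_of_nonneg (fun k _ => abs_nonneg _)).mp hrest k
        (Finset.mem_erase.mpr ⟨hk, Finset.mem_univ k⟩)
      exact this
    refine ⟨i, fun k hk => ?_, ?_⟩
    · have h0 := abs_eq_zero.mp (hzero k hk)
      apply Fin.ext
      omega
    · omega
  calc Nat.card {y : ∀ i, Fin (a i) // (∑ i, |((x i : ℤ)) - ((y i : ℤ))|) = 1}
      ≤ Nat.card (Fin d × Bool) := by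
        refine Nat.card_le_card_of_injective
          (fun y => ((key y.1 y.2).choose, decide ((x ((key y.1 y.2).choose) : ℕ) < (y.1 ((key y.1 y.2).choose) : ℕ)))) ?_
        rintro ⟨y₁, hy₁⟩ ⟨y₂, hy₂⟩ heq
        obtain ⟨hi1, hd1⟩ := (key y₁ hy₁).choose_spec
        obtain ⟨hi2, hd2⟩ := (key y₂ hy₂).choose_spec
        set i₁ := (key y₁ hy₁).choose
        set i₂ := (key y₂ hy₂).choose
        have hii : i₁ = i₂ := congrArg Prod.fst heq
        have hbb : decide ((x i₁ : ℕ) < (y₁ i₁ : ℕ)) = decide ((x i₂ : ℕ) < (y₂ i₂ : ℕ)) :=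
          congrArg Prod.snd heq
        rw [← hii] at hi2 hd2 hbb
        have hiff : ((x i₁ : ℕ) < (y₁ i₁ : ℕ)) ↔ ((x i₁ : ℕ) < (y₂ i₁ : ℕ)) :=
          decide_eq_decide.mp hbb
        have habs1 := abs_eq (by norm_num : (0:ℤ) ≤ 1) |>.mp hd1
        have habs2 := abs_eq (by norm_num : (0:ℤ) ≤ 1) |>.mp hd2
        have hval : (y₁ i₁ : ℕ) = (y₂ i₁ : ℕ) := by omega
        apply Subtype.ext
        funext k
        show y₁ k = y₂ k
        rcases eq_or_ne k i₁ with rfl | hk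
        · exact Fin.ext hval
        · rw [hi1 k hk, hi2 k hk]
    _ = 2 * d := by simp [Nat.card_eq_fintype_card, mul_comm]

lemma dimerCount_le (a : Fin d → ℕ) : dimerCount d a ≤ (2 * d) ^ (∏ i, a i) := by
  classical
  rw [dimerCount]
  calc Nat.card {m : (∀ i, Fin (a i)) → (∀ i, Fin (a i)) //
        Function.Involutive m ∧ ∀ x, (∑ i, |((x i : ℤ)) - ((m x i : ℤ))|) = 1}
      ≤ Nat.card (∀ x : ∀ i, Fin (a i),
          {y : ∀ i, Fin (a i) // (∑ i, |((x i : ℤ)) - ((y i : ℤ))|) = 1}) := by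
        refine Nat.card_le_card_of_injective (fun m x => ⟨m.1 x, m.2.2 x⟩) ?_
        rintro ⟨m₁, hm₁⟩ ⟨m₂, hm₂⟩ heq
        apply Subtype.ext
        funext x
        exact congrArg Subtype.val (congrFun heq x)
    _ = ∏ x : ∀ i, Fin (a i), Nat.card
          {y : ∀ i, Fin (a i) // (∑ i, |((x i : ℤ)) - ((y i : ℤ))|) = 1} := Nat.card_pi
    _ ≤ ∏ _x : ∀ i, Fin (a i), 2 * d := Finset.prod_le_prod' (fun x _ => nbr_card x)
    _ = (2 * d) ^ (∏ i, a i) := by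
        rw [Finset.prod_const, Finset.card_univ, Fintype.card_pi]
        simp
end upper

section arith
variable {d : ℕ}

lemma dimer_pow (cfn : Fin d → ℕ) (j : Fin d) (q bj r : ℕ) (h : cfn j = q * bj + r) :
    dimerCount d (Function.update cfn j bj) ^ q * dimerCount d (Function.update cfn j r)
      ≤ dimerCount d cfn := by
  classical
  induction q generalizing cfn with
  | zero =>
      have he : Function.update cfn j r = cfn := by
        funext i
        rcases eq_or_ne i j with rfl | hne
        · rw [Function.update_self]; omega
        · rw [Function.update_of_ne hne]
      rw [he]
      simp
  | succ q ih =>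
      have h1 : dimerCount d (Function.update cfn j bj) *
          dimerCount d (Function.update cfn j (q * bj + r)) ≤ dimerCount d cfn := by
        refine dimer_glue (j := j) ?_ ?_ ?_
        · rw [Function.update_self, Function.update_self, h]; ring
        · intro i hne; rw [Function.update_of_ne hne]
        · intro i hne; rw [Function.update_of_ne hne]
      have h2 := ih (Function.update cfn j (q * bj + r)) (by rw [Function.update_self])
      rw [Function.update_idem, Function.update_idem] at h2
      calc dimerCount d (Function.update cfn j bj) ^ (q + 1) *
            dimerCount d (Function.update cfn j r)
          = dimerCount d (Function.update cfn j bj) *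
            (dimerCount d (Function.update cfn j bj) ^ q *
              dimerCount d (Function.update cfn j r)) := by ring
        _ ≤ dimerCount d (Function.update cfn j bj) *
            dimerCount d (Function.update cfn j (q * bj + r)) :=
            Nat.mul_le_mul_left _ h2
        _ ≤ dimerCount d cfn := h1

lemma dimer_trunc (cfn : Fin d → ℕ) (j : Fin d) (q bj r : ℕ) (h : cfn j = q * bj + r)
    (hev : ∃ k, Even (Function.update cfn j r k)) :
    dimerCount d (Function.update cfn j bj) ^ q ≤ dimerCount d cfn := by
  obtain ⟨k, hk⟩ := hev
  calc dimerCount d (Function.update cfn j bj) ^ q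
      = dimerCount d (Function.update cfn j bj) ^ q * 1 := by ring
    _ ≤ dimerCount d (Function.update cfn j bj) ^ q *
        dimerCount d (Function.update cfn j r) :=
        Nat.mul_le_mul_left _ (one_le_dimerCount _ k hk)
    _ ≤ dimerCount d cfn := dimer_pow cfn j q bj r h

variable {bb a q r : Fin d → ℕ}

lemma dimer_sub (hbe : ∀ i, Even (bb i)) (ha : ∀ i, a i = q i * bb i + r i)
    (s : Finset (Fin d)) (hs : s ≠ Finset.univ) :
    dimerCount d bb ^ (∏ i ∈ s, q i) ≤
      dimerCount d (fun i => if i ∈ s then a i else bb i) := by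
  classical
  induction s using Finset.induction_on with
  | empty =>
      have : (fun i => if i ∈ (∅ : Finset (Fin d)) then a i else bb i) = bb := by
        funext i; simp
      rw [this]; simp
  | @insert x s' hx ih =>
      have hs' : s' ≠ Finset.univ := by
        intro hcon; exact hx (hcon ▸ Finset.mem_univ x)
      obtain ⟨k, hk⟩ : ∃ k, k ∉ insert x s' := by
        by_contra hcon
        push_neg at hcon
        exact hs (Finset.eq_univ_iff_forall.mpr hcon)
      have hgx : (fun i => if i ∈ insert x s' then a i else bb i) x = q x * bb x + r x := by
        simp only [Finset.mem_insert_self, if_pos]; exact ha x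
      have hupd : Function.update (fun i => if i ∈ insert x s' then a i else bb i) x (bb x)
          = fun i => if i ∈ s' then a i else bb i := by
        funext i
        rcases eq_or_ne i x with rfl | hne
        · rw [Function.update_self, if_neg hx]
        · rw [Function.update_of_ne hne]
          simp only [Finset.mem_insert, hne, false_or]
      have htr := dimer_trunc (fun i => if i ∈ insert x s' then a i else bb i) x
        (q x) (bb x) (r x) hgx
        ⟨k, by
          rw [Function.update_of_ne (by rintro rfl; exact hk (Finset.mem_insert_self _ _))]
          rw [if_neg hk]
          exact hbe k⟩
      rw [hupd] at htr
      calc dimerCount d bb ^ (∏ i ∈ insert x s', q i)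
          = (dimerCount d bb ^ (∏ i ∈ s', q i)) ^ q x := by
            rw [Finset.prod_insert hx, ← pow_mul, mul_comm]
        _ ≤ (dimerCount d (fun i => if i ∈ s' then a i else bb i)) ^ q x :=
            Nat.pow_le_pow_left (ih hs') _
        _ ≤ _ := htr

lemma dimer_main (hd : 2 ≤ d) (hbe : ∀ i, Even (bb i)) (ha : ∀ i, a i = q i * bb i + r i)
    (j0 : Fin d) (hj0 : Even (a j0)) :
    dimerCount d bb ^ (∏ i, q i) ≤ dimerCount d a := by
  classical
  obtain ⟨i₀, hne⟩ : ∃ i₀ : Fin d, i₀ ≠ j0 := by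
    refine ⟨⟨if (j0 : ℕ) = 0 then 1 else 0, by split <;> omega⟩, ?_⟩
    intro hcon
    have := congrArg Fin.val hcon
    simp only at this
    split_ifs at this <;> omega
  have hupd : Function.update a i₀ (bb i₀)
      = fun i => if i ∈ Finset.univ.erase i₀ then a i else bb i := by
    funext i
    rcases eq_or_ne i i₀ with rfl | hne'
    · rw [Function.update_self, if_neg (by simp)]
    · rw [Function.update_of_ne hne', if_pos (Finset.mem_erase.mpr ⟨hne', Finset.mem_univ i⟩)]
  have htr := dimer_trunc a i₀ (q i₀) (bb i₀) (r i₀) (ha i₀)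
    ⟨j0, by rw [Function.update_of_ne (Ne.symm hne)]; exact hj0⟩
  rw [hupd] at htr
  have hsub := dimer_sub hbe ha (Finset.univ.erase i₀)
    (fun hcon => by
      have : i₀ ∈ Finset.univ.erase i₀ := by rw [hcon]; exact Finset.mem_univ i₀
      simp at this)
  calc dimerCount d bb ^ (∏ i, q i)
      = (dimerCount d bb ^ (∏ i ∈ Finset.univ.erase i₀, q i)) ^ q i₀ := by
        rw [← pow_mul, mul_comm, Finset.mul_prod_erase Finset.univ q (Finset.mem_univ i₀)]
    _ ≤ (dimerCount d (fun i => if i ∈ Finset.univ.erase i₀ then a i else bb i)) ^ q i₀ :=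
        Nat.pow_le_pow_left hsub _
    _ ≤ dimerCount d a := htr

lemma dimer_double_all (b : Fin d → ℕ) :
    dimerCount d b ^ (2 ^ d) ≤ dimerCount d (fun i => 2 * b i) := by
  classical
  have key : ∀ s : Finset (Fin d),
      dimerCount d b ^ (2 ^ s.card) ≤ dimerCount d (fun i => if i ∈ s then 2 * b i else b i) := by
    intro s
    induction s using Finset.induction_on with
    | empty =>
        have : (fun i => if i ∈ (∅ : Finset (Fin d)) then 2 * b i else b i) = b := by
          funext i; simp
        rw [this]; simp
    | @insert x s' hx ih =>
        have hupd : Function.update (fun i => if i ∈ s' then 2 * b i else b i) x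
            (2 * (fun i => if i ∈ s' then 2 * b i else b i) x)
            = fun i => if i ∈ insert x s' then 2 * b i else b i := by
          funext i
          rcases eq_or_ne i x with rfl | hne
          · rw [Function.update_self]; simp [hx]
          · rw [Function.update_of_ne hne]
            simp only [Finset.mem_insert, hne, false_or]
        have hdbl : dimerCount d (fun i => if i ∈ s' then 2 * b i else b i) *
            dimerCount d (fun i => if i ∈ s' then 2 * b i else b i) ≤
            dimerCount d (fun i => if i ∈ insert x s' then 2 * b i else b i) := by
          rw [← hupd]
          refine dimer_glue (j := x) ?_ ?_ ?_
          · rw [Function.update_self]; ring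
          · intro i hne; rw [Function.update_of_ne hne]
          · intro i hne; rw [Function.update_of_ne hne]
        calc dimerCount d b ^ (2 ^ (insert x s').card)
            = dimerCount d b ^ (2 ^ s'.card) * dimerCount d b ^ (2 ^ s'.card) := by
              rw [Finset.card_insert_of_notMem hx, pow_succ, pow_mul]
              ring
          _ ≤ dimerCount d (fun i => if i ∈ s' then 2 * b i else b i) *
              dimerCount d (fun i => if i ∈ s' then 2 * b i else b i) :=
              Nat.mul_le_mul ih ih
          _ ≤ _ := hdbl
  have := key Finset.univ
  simp only [Finset.mem_univ, if_true, Finset.card_univ, Fintype.card_fin] at this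
  exact this
end arith

section analysis
variable {d : ℕ}

lemma exists_even_of_even_prod {a : Fin d → ℕ} (h : Even (∏ i, a i)) :
    ∃ i, Even (a i) := by
  classical
  have h2 : (2 : ℕ) ∣ ∏ i, a i := even_iff_two_dvd.mp h
  have key : ∀ s : Finset (Fin d), (2 : ℕ) ∣ ∏ i ∈ s, a i → ∃ i ∈ s, 2 ∣ a i := by
    intro s
    induction s using Finset.induction_on with
    | empty => intro h; simp at h
    | @insert x s' hx ih =>
        rw [Finset.prod_insert hx]
        intro h
        rcases (Nat.prime_two.dvd_mul).mp h with h | h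
        · exact ⟨x, Finset.mem_insert_self _ _, h⟩
        · obtain ⟨i, hi, h⟩ := ih h
          exact ⟨i, Finset.mem_insert_of_mem hi, h⟩
  obtain ⟨i, _, hi⟩ := key Finset.univ h2
  exact ⟨i, even_iff_two_dvd.mpr hi⟩

lemma prod_lower {ι : Type*} (s : Finset ι) (x : ι → ℝ) (h0 : ∀ i, 0 ≤ x i)
    (h1 : ∀ i, x i ≤ 1) : 1 - ∑ i ∈ s, (1 - x i) ≤ ∏ i ∈ s, x i := by
  classical
  induction s using Finset.induction_on with
  | empty => simp
  | @insert j s' hj ih =>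
      rw [Finset.prod_insert hj, Finset.sum_insert hj]
      have hS : 0 ≤ ∑ i ∈ s', (1 - x i) := Finset.sum_nonneg (fun i _ => by linarith [h1 i])
      nlinarith [h0 j, h1 j, ih]

/-- `φ` notation helper -/
noncomputable def dimerRatio (d : ℕ) (a : Fin d → ℕ) : ℝ :=
  Real.log (dimerCount d a) / ∏ i, (a i : ℝ)

lemma dimerRatio_le (hd : 1 ≤ d) (a : Fin d → ℕ) :
    dimerRatio d a ≤ Real.log (2 * d) := by
  have hlog2d : (0:ℝ) ≤ Real.log (2 * d) := by
    apply Real.log_nonneg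
    have : (1:ℝ) ≤ (d:ℝ) := by exact_mod_cast hd
    linarith
  rw [dimerRatio]
  rcases eq_or_ne (∏ i, ((a i : ℕ) : ℝ)) 0 with hV | hV
  · rw [hV, div_zero]; exact hlog2d
  · have hVnat : (∏ i, a i) ≠ 0 := by
      intro h
      apply hV
      rw [← Nat.cast_prod, h, Nat.cast_zero]
    have hVpos : (0:ℝ) < ∏ i, ((a i : ℕ) : ℝ) := by
      rw [← Nat.cast_prod]
      exact_mod_cast Nat.pos_of_ne_zero hVnat
    rw [div_le_iff₀ hVpos]
    have hle := dimerCount_le a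
    have hlogf : Real.log (dimerCount d a) ≤ ((∏ i, a i : ℕ) : ℝ) * Real.log (2 * d) := by
      rcases Nat.eq_zero_or_pos (dimerCount d a) with h0 | h0
      · rw [h0, Nat.cast_zero, Real.log_zero]; positivity
      · have h1 : Real.log (dimerCount d a) ≤ Real.log ((((2 * d) ^ (∏ i, a i) : ℕ)) : ℝ) :=
          Real.log_le_log (by exact_mod_cast h0) (by exact_mod_cast hle)
        rw [Nat.cast_pow, Real.log_pow] at h1
        have h2 : Real.log ((2 * d : ℕ) : ℝ) = Real.log (2 * (d:ℝ)) := by norm_cast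
        rw [h2] at h1
        exact h1
    rw [Nat.cast_prod] at hlogf
    linarith

lemma dimerRatio_nonneg (hd : 1 ≤ d) (a : Fin d → ℕ) (hev : Even (∏ i, a i)) :
    0 ≤ dimerRatio d a := by
  rw [dimerRatio]
  apply div_nonneg
  · have := one_le_dimerCount_of_even a hev hd
    apply Real.log_nonneg
    exact_mod_cast this
  · positivity

lemma dimerRatio_double (b : Fin d → ℕ) (hb : ∀ i, 1 ≤ b i) (hf : 1 ≤ dimerCount d b) :
    dimerRatio d b ≤ dimerRatio d (fun i => 2 * b i) := by
  have hkey := dimer_double_all b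
  have hVb : (0:ℝ) < ∏ i, ((b i : ℕ) : ℝ) :=
    Finset.prod_pos (fun i _ => by exact_mod_cast hb i)
  have hlog : (2:ℝ) ^ d * Real.log (dimerCount d b) ≤ Real.log (dimerCount d (fun i => 2 * b i)) := by
    calc (2:ℝ) ^ d * Real.log (dimerCount d b)
        = Real.log (((dimerCount d b ^ 2 ^ d : ℕ) : ℝ)) := by
          rw [Nat.cast_pow, Real.log_pow]; push_cast; ring
      _ ≤ _ := by
          apply Real.log_le_log
          · have : (1:ℕ) ≤ dimerCount d b ^ 2 ^ d := Nat.one_le_pow _ _ hf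
            exact_mod_cast Nat.lt_of_lt_of_le Nat.zero_lt_one this
          · exact_mod_cast hkey
  rw [dimerRatio, dimerRatio]
  have hV2 : ∏ i, ((2 * b i : ℕ) : ℝ) = 2 ^ d * ∏ i, ((b i : ℕ) : ℝ) := by
    push_cast
    rw [Finset.prod_mul_distrib, Finset.prod_const, Finset.card_univ, Fintype.card_fin]
  rw [hV2]
  rw [div_le_div_iff₀ hVb (by positivity)]
  have hlogb : 0 ≤ Real.log (dimerCount d b) := Real.log_nonneg (by exact_mod_cast hf)
  nlinarith [hlog, hVb]
end analysis


/-- (Hammersley) For `d ≥ 2` there is a finite constant `λ_d` such that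
`(a₁⋯a_d)⁻¹ log f(a₁,…,a_d) → λ_d` as all side lengths tend to infinity through
values of even product. -/
theorem dimer_entropy_exists (d : ℕ) (hd : 2 ≤ d) :
    ∃ lam : ℝ,
      Tendsto (fun a : Fin d → ℕ => Real.log (dimerCount d a) / ∏ i, (a i : ℝ))
        ((Filter.pi fun _ : Fin d => (atTop : Filter ℕ)) ⊓
          Filter.principal {a | Even (∏ i, a i)})
        (nhds lam) := by
  classical
  have hd1 : 1 ≤ d := by omega
  set S : Set ℝ := dimerRatio d '' {a | Even (∏ i, a i)} with hS
  have hbdd : BddAbove S := ⟨Real.log (2 * d), by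
    rintro x ⟨a, _, rfl⟩; exact dimerRatio_le hd1 a⟩
  have h2e : Even (∏ _i : Fin d, (2:ℕ)) := by
    rw [Finset.prod_const]
    exact (Nat.even_pow).mpr ⟨even_two, by simp [Finset.card_univ]; omega⟩
  have hne : S.Nonempty := ⟨dimerRatio d (fun _ => 2), ⟨fun _ => 2, h2e, rfl⟩⟩
  set L := sSup S with hL
  have hub : ∀ a : Fin d → ℕ, Even (∏ i, a i) → dimerRatio d a ≤ L :=
    fun a ha => le_csSup hbdd ⟨a, ha, rfl⟩
  refine ⟨L, ?_⟩
  have hfun : (fun a : Fin d → ℕ => Real.log (dimerCount d a) / ∏ i, (a i : ℝ))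
      = dimerRatio d := rfl
  rw [hfun, Metric.tendsto_nhds]
  intro ε hε
  rw [Filter.eventually_inf_principal]
  rcases lt_or_ge L ε with hcase | hcase
  · apply Filter.Eventually.of_forall
    intro a ha
    have h1 : 0 ≤ dimerRatio d a := dimerRatio_nonneg hd1 a ha
    have h2 : dimerRatio d a ≤ L := hub a ha
    rw [Real.dist_eq, abs_lt]
    have hL0 : 0 ≤ L := le_trans h1 h2
    constructor <;> linarith
  · -- ε ≤ L
    obtain ⟨x, hxS, hx⟩ := exists_lt_of_lt_csSup hne (show L - ε/2 < L by linarith)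
    obtain ⟨b, hbe, rfl⟩ := hxS
    have hbe' : Even (∏ i, b i) := hbe
    have hφb : 0 < dimerRatio d b := by linarith
    have hVb : (∏ i, ((b i : ℕ):ℝ)) ≠ 0 := by
      intro h
      rw [dimerRatio, h, div_zero] at hφb
      exact lt_irrefl _ hφb
    have hbpos : ∀ i, 1 ≤ b i := by
      intro i
      by_contra hcon
      push_neg at hcon
      apply hVb
      refine Finset.prod_eq_zero (Finset.mem_univ i) ?_
      have : b i = 0 := by omega
      rw [this, Nat.cast_zero]
    have hfb : 1 ≤ dimerCount d b := one_le_dimerCount_of_even b hbe' hd1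
    have hφbb : dimerRatio d b ≤ dimerRatio d (fun i => 2 * b i) :=
      dimerRatio_double b hbpos hfb
    set bb : Fin d → ℕ := fun i => 2 * b i with hbbdef
    have hbbe : ∀ i, Even (bb i) := fun i => ⟨b i, by rw [hbbdef]; ring⟩
    have hbb1 : ∀ i, 1 ≤ bb i := fun i => by
      have := hbpos i
      simp only [hbbdef]
      omega
    have i0 : Fin d := ⟨0, by omega⟩
    have hbbprodeven : Even (∏ i, bb i) := by
      rw [even_iff_two_dvd]
      exact dvd_trans ⟨b i0, rfl⟩ (Finset.dvd_prod_of_mem bb (Finset.mem_univ i0))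
    have hfbb : 1 ≤ dimerCount d bb := one_le_dimerCount bb i0 (hbbe i0)
    have hφbbL : dimerRatio d bb ≤ L := hub bb hbbprodeven
    have hφbbC : dimerRatio d bb ≤ Real.log (2*d) := dimerRatio_le hd1 bb
    have hC0 : (0:ℝ) ≤ Real.log (2*d) := Real.log_nonneg (by
      have : (1:ℝ) ≤ (d:ℝ) := by exact_mod_cast hd1
      linarith)
    set C : ℝ := Real.log (2*d) with hC
    set δ : ℝ := ε / (2 * (C + 1)) with hδ
    have hδ0 : 0 < δ := by
      rw [hδ]
      positivity
    have hδε : δ * (2 * (C + 1)) = ε := by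
      rw [hδ]
      field_simp
    set B : ℕ := ∑ i, bb i with hB
    have hbbB : ∀ i, bb i ≤ B :=
      fun i => Finset.single_le_sum (f := bb) (fun _ _ => Nat.zero_le _) (Finset.mem_univ i)
    obtain ⟨M, hM⟩ := exists_nat_gt (max ((d * B : ℝ) / δ) 1)
    have hM0 : (0:ℝ) < M := lt_trans (by norm_num : (0:ℝ) < 1)
      (lt_of_le_of_lt (le_max_right _ _) hM)
    have hM1 : 1 ≤ M := by exact_mod_cast hM0
    have hdB : (d * B : ℝ) / M < δ := by
      rw [div_lt_iff₀ hM0]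
      have h1 : (d * B : ℝ) / δ < M := lt_of_le_of_lt (le_max_left _ _) hM
      calc (d * B : ℝ) = ((d * B : ℝ) / δ) * δ := by field_simp
        _ < M * δ := mul_lt_mul_of_pos_right h1 hδ0
        _ = δ * M := by ring
    refine Filter.Eventually.mono
      (Filter.eventually_pi (fun i : Fin d => Filter.eventually_ge_atTop M)) ?_
    intro a haM hae
    have hae' : Even (∏ i, a i) := hae
    set q : Fin d → ℕ := fun i => a i / bb i with hq
    set r : Fin d → ℕ := fun i => a i % bb i with hr
    have ha' : ∀ i, a i = q i * bb i + r i := fun i => by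
      rw [hq, hr, mul_comm]
      exact (Nat.div_add_mod _ _).symm
    obtain ⟨j0, hj0⟩ := exists_even_of_even_prod hae'
    have hmain := dimer_main hd hbbe ha' j0 hj0
    have hapos : ∀ i, 0 < a i := fun i => lt_of_lt_of_le (by omega) (haM i)
    have hVa : (0:ℝ) < ∏ i, ((a i:ℕ):ℝ) :=
      Finset.prod_pos fun i _ => by exact_mod_cast hapos i
    have hVbb : (0:ℝ) < ∏ i, ((bb i:ℕ):ℝ) :=
      Finset.prod_pos fun i _ => by exact_mod_cast hbb1 i
    have hlogbb : 0 ≤ Real.log (dimerCount d bb) := Real.log_nonneg (by exact_mod_cast hfbb)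
    have hlog : ((∏ i, q i : ℕ):ℝ) * Real.log (dimerCount d bb) ≤ Real.log (dimerCount d a) := by
      have hpowpos : (0:ℝ) < ((dimerCount d bb ^ (∏ i, q i) : ℕ):ℝ) := by
        have : (1:ℕ) ≤ dimerCount d bb ^ (∏ i, q i) := Nat.one_le_pow _ _ hfbb
        exact_mod_cast Nat.lt_of_lt_of_le Nat.zero_lt_one this
      have h1 : Real.log (((dimerCount d bb ^ (∏ i, q i) : ℕ)):ℝ) ≤
          Real.log (dimerCount d a) :=
        Real.log_le_log hpowpos (by exact_mod_cast hmain)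
      rw [Nat.cast_pow, Real.log_pow] at h1
      exact h1
    -- product of ratios
    have hx1 : ∀ i, ((q i * bb i:ℕ):ℝ)/((a i:ℕ):ℝ) ≤ 1 := fun i => by
      rw [div_le_one (by exact_mod_cast hapos i)]
      exact_mod_cast Nat.div_mul_le_self (a i) (bb i)
    have hx0 : ∀ i, 0 ≤ ((q i * bb i:ℕ):ℝ)/((a i:ℕ):ℝ) := fun i => by positivity
    have hPlow := prod_lower Finset.univ (fun i => ((q i * bb i:ℕ):ℝ)/((a i:ℕ):ℝ)) hx0 hx1
    have hterm : ∀ i, 1 - ((q i * bb i:ℕ):ℝ)/((a i:ℕ):ℝ) ≤ (B:ℝ)/M := by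
      intro i
      have hai : (0:ℝ) < ((a i:ℕ):ℝ) := by exact_mod_cast hapos i
      have h1 : (a i : ℝ) - (bb i : ℝ) ≤ ((q i * bb i:ℕ):ℝ) := by
        have hle : a i ≤ q i * bb i + bb i := by
          have h0 := ha' i
          have hrlt : r i < bb i := Nat.mod_lt _ (by have := hbb1 i; omega)
          omega
        have hcast : (a i : ℝ) ≤ ((q i * bb i : ℕ):ℝ) + (bb i:ℝ) := by exact_mod_cast hle
        linarith
      have h2 : ((a i:ℝ) - (bb i:ℝ))/((a i:ℕ):ℝ) ≤ ((q i * bb i:ℕ):ℝ)/((a i:ℕ):ℝ) := by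
        gcongr
      have h3 : ((a i:ℝ) - (bb i:ℝ))/((a i:ℕ):ℝ) = 1 - (bb i:ℝ)/((a i:ℕ):ℝ) := by
        field_simp
      have hbbB' : ((bb i:ℕ):ℝ) ≤ (B:ℝ) := by exact_mod_cast hbbB i
      have haM' : (M:ℝ) ≤ ((a i:ℕ):ℝ) := by exact_mod_cast haM i
      have hB0 : (0:ℝ) ≤ (B:ℝ) := by positivity
      have h4 : (bb i:ℝ)/((a i:ℕ):ℝ) ≤ (B:ℝ)/(M:ℝ) := by
        calc (bb i:ℝ)/((a i:ℕ):ℝ) ≤ (B:ℝ)/((a i:ℕ):ℝ) := by gcongr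
          _ ≤ (B:ℝ)/(M:ℝ) := by gcongr
      rw [h3] at h2
      linarith
    have hsum : ∑ i, (1 - ((q i * bb i:ℕ):ℝ)/((a i:ℕ):ℝ)) ≤ (d:ℝ) * ((B:ℝ)/M) := by
      calc ∑ i, (1 - ((q i * bb i:ℕ):ℝ)/((a i:ℕ):ℝ))
          ≤ ∑ _i : Fin d, (B:ℝ)/M := Finset.sum_le_sum (fun i _ => hterm i)
        _ = (d:ℝ) * ((B:ℝ)/M) := by
            rw [Finset.sum_const, Finset.card_univ, Fintype.card_fin, nsmul_eq_mul]
    have hPd : 1 - δ ≤ ∏ i, ((q i * bb i:ℕ):ℝ)/((a i:ℕ):ℝ) := by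
      have hdBM : (d:ℝ) * ((B:ℝ)/M) = (d * B : ℝ)/M := by push_cast; ring
      linarith [hPlow, hsum, hdB]
    have hLHSeq : dimerRatio d bb * ∏ i, ((q i * bb i:ℕ):ℝ)/((a i:ℕ):ℝ)
        = ((∏ i, q i : ℕ):ℝ) * Real.log (dimerCount d bb) / ∏ i, ((a i:ℕ):ℝ) := by
      rw [dimerRatio, Finset.prod_div_distrib]
      push_cast
      rw [Finset.prod_mul_distrib]
      field_simp
    have hφa : dimerRatio d bb * (∏ i, ((q i * bb i:ℕ):ℝ)/((a i:ℕ):ℝ)) ≤ dimerRatio d a := by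
      rw [hLHSeq, dimerRatio]
      gcongr
    have hφbb2 : L - ε/2 < dimerRatio d bb := lt_of_lt_of_le hx hφbb
    have hφbb0 : 0 ≤ dimerRatio d bb := le_trans hφb.le hφbb
    have hmul : dimerRatio d bb * (1-δ) ≤ dimerRatio d bb * (∏ i, ((q i * bb i:ℕ):ℝ)/((a i:ℕ):ℝ)) :=
      mul_le_mul_of_nonneg_left hPd hφbb0
    have hexp : dimerRatio d bb * (1 - δ) = dimerRatio d bb - dimerRatio d bb * δ := by ring
    have hCd : dimerRatio d bb * δ ≤ C * δ := mul_le_mul_of_nonneg_right hφbbC hδ0.le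
    have hCh : (C + 1) * δ = ε/2 := by
      rw [hδ]
      field_simp
    have hexpand : (C + 1) * δ = C * δ + δ := by ring
    have hfinal : L - ε < dimerRatio d a := by linarith
    rw [Real.dist_eq, abs_lt]
    constructor
    · linarith
    · have := hub a hae'
      linarith
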